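/- Let χ : ℝⁿ → ℝ be a bounded measurable 1-periodic function (periodic with period 1 in each coordinate) and Ω ⊂ ℝⁿ a bounded open set. Then the rescaled functions χ^ε(x) := χ(x/ε) converge weakly in L²(Ω) as ε → 0 to the constant ⟨χ⟩ = ∫_{[0,1]ⁿ} χ(ξ) dξ; i.e., for every φ ∈ L²(Ω), ∫_Ω χ(x/ε) φ(x) dx → ⟨χ⟩ ∫_Ω φ(x) dx. -/

import Mathlib

open MeasureTheory Filter Set Pointwise
open scoped ENNReal

namespace Stmt8Aux
variable {n : ℕ}

noncomputable def BB (n : ℕ) : Set (Fin n → ℝ) := Set.univ.pi fun _ => Set.Ico (0:ℝ) 1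

def cube (z : Fin n → ℤ) : Set (Fin n → ℝ) := Set.univ.pi fun i => Set.Ico (z i : ℝ) (z i + 1)

def zc (z : Fin n → ℤ) : Fin n → ℝ := fun i => (z i : ℝ)

theorem mem_cube {z : Fin n → ℤ} {x : Fin n → ℝ} : x ∈ cube z ↔ ∀ i, ⌊x i⌋ = z i := by
  simp only [cube, Set.mem_pi, Set.mem_univ, forall_true_left, Set.mem_Ico]
  refine forall_congr' fun i => ?_
  rw [Int.floor_eq_iff]

theorem cube_meas (z : Fin n → ℤ) : MeasurableSet (cube z) :=
  MeasurableSet.univ_pi fun _ => measurableSet_Ico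

theorem cube_disj : Pairwise (Function.onFun Disjoint (cube (n := n))) := by
  intro z z' hzz
  rw [Function.onFun, Set.disjoint_left]
  intro x hx hx'
  exact hzz (funext fun i => (mem_cube.1 hx i).symm.trans (mem_cube.1 hx' i))

theorem cube_cover : (⋃ z : Fin n → ℤ, cube z) = Set.univ := by
  ext x
  simp only [Set.mem_iUnion, Set.mem_univ, iff_true]
  exact ⟨fun i => ⌊x i⌋, mem_cube.2 fun i => rfl⟩

theorem preimage_cube (z : Fin n → ℤ) : (fun y => zc z + y) ⁻¹' cube z = BB n := by
  ext y
  simp only [Set.mem_preimage, cube, BB, Set.mem_pi, Set.mem_univ, forall_true_left,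
    Set.mem_Ico, Pi.add_apply, zc]
  refine forall_congr' fun i => ?_
  constructor <;> intro h <;> constructor <;> linarith [h.1, h.2]

theorem volume_BB : volume (BB n) = 1 := by
  rw [BB, volume_pi_pi]
  simp [Real.volume_Ico]

theorem hasSum_unfold (g : (Fin n → ℝ) → ℝ) (hg : Integrable g) :
    HasSum (fun z : Fin n → ℤ => ∫ y in BB n, g (zc z + y)) (∫ x, g x) := by
  have h := hasSum_integral_iUnion (μ := volume) (f := g) cube_meas cube_disj
    (by rw [cube_cover]; exact hg.integrableOn)
  rw [cube_cover, Measure.restrict_univ] at h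
  suffices e : (fun z : Fin n → ℤ => ∫ y in BB n, g (zc z + y)) = fun z => ∫ x in cube z, g x by
    rw [e]; exact h
  funext z
  rw [← (measurePreserving_add_left volume (zc z)).setIntegral_preimage_emb
    (MeasurableEquiv.addLeft (zc z)).measurableEmbedding g (cube z), preimage_cube]

-- integrability of χ (bounded measurable) restricted to BB
theorem chi_intOn {χ : (Fin n → ℝ) → ℝ} (hmeas : Measurable χ) {M : ℝ}
    (hM : ∀ ξ, |χ ξ| ≤ M) : IntegrableOn χ (BB n) := by
  refine Measure.integrableOn_of_bounded (M := M) (by simp [volume_BB]) hmeas.aestronglyMeasurable ?_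
  exact Eventually.of_forall fun x => by simpa [Real.norm_eq_abs] using hM x

set_option maxHeartbeats 2000000 in
theorem core {M : ℝ} (χ : (Fin n → ℝ) → ℝ) (hmeas : Measurable χ) (hM : ∀ ξ, |χ ξ| ≤ M)
    (hper : ∀ (ξ : Fin n → ℝ) (z : Fin n → ℤ), χ (ξ + fun i => (z i : ℝ)) = χ ξ)
    (f : (Fin n → ℝ) → ℝ) (hf : Continuous f) (hfc : HasCompactSupport f) :
    Tendsto (fun ε : ℝ => ∫ x, χ (ε⁻¹ • x) * f x) (nhdsWithin 0 (Set.Ioi 0))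
      (nhds ((∫ y in BB n, χ y) * ∫ x, f x)) := by
  have hM0 : 0 ≤ M := le_trans (abs_nonneg _) (hM 0)
  set m : ℝ := ∫ y in BB n, χ y with hm_def
  have hmabs : |m| ≤ M := by
    have := norm_setIntegral_le_of_norm_le_const (μ := volume) (s := BB n) (C := M) (f := χ)
      (by simp [volume_BB]) (fun x _ => by simpa [Real.norm_eq_abs] using hM x)
    simpa [Measure.real, volume_BB, Real.norm_eq_abs] using this
  rw [Metric.tendsto_nhdsWithin_nhds]
  intro δ hδ
  set K : Set (Fin n → ℝ) := tsupport f + Metric.closedBall (0 : Fin n → ℝ) 1 with hK_def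
  have hK : IsCompact K := IsCompact.add hfc (isCompact_closedBall _ _)
  set V : ℝ := (volume K).toReal with hV_def
  have hV0 : 0 ≤ V := ENNReal.toReal_nonneg
  set δ'' : ℝ := δ / (2 * (M + 1) * (V + 1)) with hδ''_def
  have hδ''0 : 0 < δ'' := by positivity
  obtain ⟨ε₀, hε₀, hucf⟩ := Metric.uniformContinuous_iff.mp
    (hfc.uniformContinuous_of_continuous hf) δ'' hδ''0
  refine ⟨min ε₀ 1, by positivity, ?_⟩
  intro ε hεmem hεdist
  have hε : 0 < ε := hεmem
  have hε1 : ε ≤ 1 := by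
    have := hεdist
    rw [Real.dist_eq, sub_zero, abs_of_pos hε] at this
    exact le_of_lt (lt_of_lt_of_le this (min_le_right _ _))
  have hεε₀ : ε < ε₀ := by
    have := hεdist
    rw [Real.dist_eq, sub_zero, abs_of_pos hε] at this
    exact lt_of_lt_of_le this (min_le_left _ _)
  -- the rescaled integrand
  set g : (Fin n → ℝ) → ℝ := fun u => χ u * f (ε • u) with hg_def
  have hfε_cont : Continuous fun u : Fin n → ℝ => f (ε • u) := hf.comp (continuous_const_smul ε)
  have hfε_supp : HasCompactSupport fun u : Fin n → ℝ => f (ε • u) :=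
    hfc.comp_smul (ne_of_gt hε)
  have hfε : Integrable fun u : Fin n → ℝ => f (ε • u) :=
    hfε_cont.integrable_of_hasCompactSupport hfε_supp
  have hχaesm : AEStronglyMeasurable χ (volume : Measure (Fin n → ℝ)) :=
    hmeas.aestronglyMeasurable
  have hg_int : Integrable g := hfε.bdd_mul hχaesm (c := M) (Eventually.of_forall fun x => by
    simpa [Real.norm_eq_abs] using hM x)
  -- substitution
  have hfinrank : Module.finrank ℝ (Fin n → ℝ) = n := Module.finrank_fin_fun ℝ
  have hsub1 : ∫ x, χ (ε⁻¹ • x) * f x = ε ^ n * ∫ u, g u := by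
    have h2 := Measure.integral_comp_inv_smul volume g ε
    simp only [hg_def, smul_inv_smul₀ (ne_of_gt hε), hfinrank,
      abs_of_pos (pow_pos hε n), smul_eq_mul] at h2
    exact h2
  have hsub2 : ∫ x, f x = ε ^ n * ∫ u, f (ε • u) := by
    have h2 := Measure.integral_comp_inv_smul volume (fun u => f (ε • u)) ε
    simp only [smul_inv_smul₀ (ne_of_gt hε), hfinrank,
      abs_of_pos (pow_pos hε n), smul_eq_mul] at h2
    exact h2
  -- unfolded sums
  set F : (Fin n → ℤ) → (Fin n → ℝ) → ℝ := fun z y => f (ε • (zc z + y)) with hF_def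
  have hper' : ∀ (z : Fin n → ℤ) (y : Fin n → ℝ), χ (zc z + y) = χ y := by
    intro z y
    rw [add_comm]
    exact hper y z
  have hA : HasSum (fun z : Fin n → ℤ => ∫ y in BB n, χ y * F z y) (∫ u, g u) := by
    have h := hasSum_unfold g hg_int
    convert h using 2 with z
    refine setIntegral_congr_fun (by
      exact MeasurableSet.univ_pi fun _ => measurableSet_Ico) fun y _ => ?_
    simp only [hg_def, hF_def, hper' z y]
  have hB : HasSum (fun z : Fin n → ℤ => ∫ y in BB n, F z y) (∫ u, f (ε • u)) :=
    hasSum_unfold _ hfε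
  have hI : HasSum (fun z : Fin n → ℤ => ∫ y in BB n, |F z y|) (∫ u, |f (ε • u)|) :=
    hasSum_unfold _ hfε.abs
  -- per-z integrability
  have hFz_glob : ∀ z, Integrable (F z) := by
    intro z
    exact ((measurePreserving_add_left volume (zc z)).integrable_comp
      hfε.aestronglyMeasurable).2 hfε
  have hFz_int : ∀ z, IntegrableOn (F z) (BB n) := fun z => (hFz_glob z).integrableOn
  have hχF_int : ∀ z, IntegrableOn (fun y => χ y * F z y) (BB n) := by
    intro z
    exact (hFz_int z).bdd_mul hχaesm.restrict (c := M) (Eventually.of_forall fun x => by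
      simpa [Real.norm_eq_abs] using hM x)
  -- the difference terms
  set d : (Fin n → ℤ) → ℝ := fun z => (∫ y in BB n, χ y * F z y) - m * ∫ y in BB n, F z y
    with hd_def
  have hd : HasSum d ((∫ u, g u) - m * ∫ u, f (ε • u)) := hA.sub (hB.mul_left m)
  -- termwise bound
  set S : Set (Fin n → ℤ) := {z | ∃ y ∈ BB n, F z y ≠ 0} with hS_def
  have hBBmeas : MeasurableSet (BB n) := MeasurableSet.univ_pi fun _ => measurableSet_Ico
  have hBBfin : volume (BB n) < ⊤ := by simp [volume_BB]
  have hbound : ∀ z, |d z| ≤ S.indicator (fun _ => M * δ'') z := by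
    intro z
    by_cases hz : z ∈ S
    · rw [Set.indicator_of_mem hz]
      set c : ℝ := ∫ y in BB n, F z y with hc_def
      have hdz : d z = ∫ y in BB n, χ y * (F z y - c) := by
        simp_rw [mul_sub]
        rw [integral_sub (hχF_int z) ((chi_intOn hmeas hM).mul_const c),
          integral_mul_const, hd_def]
      have hFc : ∀ y ∈ BB n, |F z y - c| ≤ δ'' := by
        intro y hy
        have hint1 : IntegrableOn (fun _ : Fin n → ℝ => F z y) (BB n) :=
          integrableOn_const hBBfin.ne
        have hint2 : IntegrableOn (fun w => F z y - F z w) (BB n) := hint1.sub (hFz_int z)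
        have h1 : F z y - c = ∫ w in BB n, (F z y - F z w) := by
          rw [integral_sub hint1 (hFz_int z), setIntegral_const]
          simp [Measure.real, volume_BB, hc_def]
        rw [h1]
        have h2 := norm_setIntegral_le_of_norm_le_const (μ := volume) (s := BB n) (C := δ'')
          (f := fun w => F z y - F z w) hBBfin (fun w hw => ?_)
        · simpa [Measure.real, volume_BB, Real.norm_eq_abs] using h2
        · -- |F z y - F z w| ≤ δ''
          have hdistyw : dist y w ≤ 1 := by
            rw [dist_pi_le_iff zero_le_one]
            intro i
            have hyi := hy i (Set.mem_univ i)
            have hwi := hw i (Set.mem_univ i)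
            simp only [Set.mem_Ico] at hyi hwi
            rw [Real.dist_eq, abs_le]
            constructor <;> linarith [hyi.1, hyi.2, hwi.1, hwi.2]
          have hdist : dist (ε • (zc z + y)) (ε • (zc z + w)) < ε₀ := by
            rw [dist_smul₀, dist_add_left, Real.norm_eq_abs, abs_of_pos hε]
            calc ε * dist y w ≤ ε * 1 := by
                  exact mul_le_mul_of_nonneg_left hdistyw hε.le
              _ = ε := mul_one ε
              _ < ε₀ := hεε₀
          have := hucf hdist
          rw [Real.dist_eq] at this
          simpa [hF_def, Real.norm_eq_abs] using this.le
      rw [hdz]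
      have hint3 : IntegrableOn (fun y => χ y * (F z y - c)) (BB n) := by
        simp_rw [mul_sub]
        exact (hχF_int z).sub ((chi_intOn hmeas hM).mul_const c)
      have h3 := norm_setIntegral_le_of_norm_le_const (μ := volume) (s := BB n) (C := M * δ'')
        (f := fun y => χ y * (F z y - c)) hBBfin (fun y hy => ?_)
      · simpa [Measure.real, volume_BB, Real.norm_eq_abs] using h3
      · rw [Real.norm_eq_abs, abs_mul]
        exact mul_le_mul (hM y) (hFc y hy) (abs_nonneg _) hM0
    · rw [Set.indicator_of_notMem hz]
      have hz' : ∀ y ∈ BB n, F z y = 0 := by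
        intro y hy
        by_contra hne
        exact hz ⟨y, hy, hne⟩
      have e1 : (∫ y in BB n, χ y * F z y) = 0 :=
        setIntegral_eq_zero_of_forall_eq_zero fun y hy => by rw [hz' y hy, mul_zero]
      have e2 : (∫ y in BB n, F z y) = 0 :=
        setIntegral_eq_zero_of_forall_eq_zero fun y hy => hz' y hy
      simp [hd_def, e1, e2]
  -- summability of |d|
  have habs_sum : Summable fun z => |d z| := by
    refine Summable.of_nonneg_of_le (fun z => abs_nonneg _) (fun z => ?_)
      ((hI.summable).mul_left (2 * M))
    have hInn : ∀ z, 0 ≤ ∫ y in BB n, |F z y| := fun z =>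
      setIntegral_nonneg hBBmeas fun y _ => abs_nonneg _
    have h1 : |∫ y in BB n, χ y * F z y| ≤ M * ∫ y in BB n, |F z y| := by
      calc |∫ y in BB n, χ y * F z y| ≤ ∫ y in BB n, |χ y * F z y| :=
            by simpa only [Real.norm_eq_abs] using
            norm_integral_le_integral_norm (μ := volume.restrict (BB n)) fun y => χ y * F z y
        _ ≤ ∫ y in BB n, M * |F z y| := by
            refine integral_mono (hχF_int z).abs ((hFz_int z).abs.const_mul M) fun y => ?_
            rw [abs_mul]
            exact mul_le_mul_of_nonneg_right (hM y) (abs_nonneg _)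
        _ = M * ∫ y in BB n, |F z y| := integral_const_mul M _
    have h2 : |m * ∫ y in BB n, F z y| ≤ M * ∫ y in BB n, |F z y| := by
      rw [abs_mul]
      refine mul_le_mul hmabs ?_ (abs_nonneg _) hM0
      simpa [Real.norm_eq_abs] using
        norm_integral_le_integral_norm (μ := volume.restrict (BB n)) (F z)
    calc |d z| ≤ |∫ y in BB n, χ y * F z y| + |m * ∫ y in BB n, F z y| :=
          abs_sub _ _
      _ ≤ 2 * M * ∫ y in BB n, |F z y| := by linarith
  -- scaled boxes
  have htsum_le : (∑' z, |d z|) ≤ M * δ'' * V / ε ^ n := by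
    classical
    refine Summable.tsum_le_of_sum_le habs_sum fun s => ?_
    set E' : (Fin n → ℤ) → Set (Fin n → ℝ) :=
      fun z => Set.univ.pi fun i => Set.Ico (ε * z i) (ε * z i + ε) with hE'_def
    have hE'meas : ∀ z, MeasurableSet (E' z) :=
      fun z => MeasurableSet.univ_pi fun _ => measurableSet_Ico
    have hE'floor : ∀ z x, x ∈ E' z → ∀ i, ⌊x i / ε⌋ = z i := by
      intro z x hx i
      have h1 := hx i (Set.mem_univ i)
      simp only [Set.mem_Ico] at h1
      rw [Int.floor_eq_iff]
      constructor
      · rw [le_div_iff₀ hε]; linarith [h1.1]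
      · rw [div_lt_iff₀ hε]; push_cast; linarith [h1.2]
    have hE'disj : ∀ z z' : Fin n → ℤ, z ≠ z' → Disjoint (E' z) (E' z') := by
      intro z z' hzz
      rw [Set.disjoint_left]
      intro x hx hx'
      exact hzz (funext fun i => (hE'floor z x hx i).symm.trans (hE'floor z' x hx' i))
    have hE'vol : ∀ z, volume (E' z) = ENNReal.ofReal ε ^ n := by
      intro z
      rw [hE'_def, volume_pi_pi]
      have : ∀ i : Fin n, volume (Set.Ico (ε * (z i : ℝ)) (ε * z i + ε)) = ENNReal.ofReal ε := by
        intro i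
        rw [Real.volume_Ico]
        ring_nf
      simp only [this, Finset.prod_const, Finset.card_univ, Fintype.card_fin]
    have hE'K : ∀ z ∈ S, E' z ⊆ K := by
      intro z hz x hx
      obtain ⟨y₀, hy₀B, hy₀⟩ := hz
      have hp : ε • (zc z + y₀) ∈ tsupport f := subset_tsupport f hy₀
      refine ⟨ε • (zc z + y₀), hp, x - ε • (zc z + y₀), ?_, by
        funext i
        simp only [Pi.add_apply, Pi.sub_apply]
        ring⟩
      rw [Metric.mem_closedBall, dist_zero_right]
      rw [pi_norm_le_iff_of_nonneg zero_le_one]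
      intro i
      have hxi := hx i (Set.mem_univ i)
      simp only [Set.mem_Ico] at hxi
      have hyi := hy₀B i (Set.mem_univ i)
      simp only [Set.mem_Ico] at hyi
      simp only [Pi.sub_apply, Pi.smul_apply, Pi.add_apply, smul_eq_mul, zc, Real.norm_eq_abs]
      rw [abs_le]
      constructor <;> nlinarith [hxi.1, hxi.2, hyi.1, hyi.2,
        mul_nonneg hε.le hyi.1, (mul_lt_mul_iff_right₀ hε).2 hyi.2]
    set s' := s.filter (fun z => z ∈ S) with hs'_def
    have hcard : (s'.card : ℝ) * ε ^ n ≤ V := by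
      have hmeasle : (s'.card : ℝ≥0∞) * ENNReal.ofReal ε ^ n ≤ volume K := by
        have hunion : volume (⋃ z ∈ s', E' z) = ∑ z ∈ s', volume (E' z) := by
          refine measure_biUnion_finset (fun z _ z' _ hzz => hE'disj z z' hzz)
            (fun z _ => hE'meas z)
        have hsub : (⋃ z ∈ s', E' z) ⊆ K := by
          refine Set.iUnion₂_subset fun z hzmem => ?_
          exact hE'K z (Finset.mem_filter.mp hzmem).2
        calc (s'.card : ℝ≥0∞) * ENNReal.ofReal ε ^ n
            = ∑ z ∈ s', volume (E' z) := by
              simp only [hE'vol, Finset.sum_const, nsmul_eq_mul]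
          _ = volume (⋃ z ∈ s', E' z) := hunion.symm
          _ ≤ volume K := measure_mono hsub
      have h2 := ENNReal.toReal_mono hK.measure_lt_top.ne hmeasle
      rw [ENNReal.toReal_mul, ENNReal.toReal_pow, ENNReal.toReal_ofReal hε.le,
        ENNReal.toReal_natCast] at h2
      exact h2
    calc ∑ z ∈ s, |d z| ≤ ∑ z ∈ s, S.indicator (fun _ => M * δ'') z :=
          Finset.sum_le_sum fun z _ => hbound z
      _ = ∑ z ∈ s', (M * δ'') := by
          rw [Finset.sum_indicator_eq_sum_filter]
      _ = s'.card * (M * δ'') := by rw [Finset.sum_const, nsmul_eq_mul]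
      _ ≤ V / ε ^ n * (M * δ'') := by
          refine mul_le_mul_of_nonneg_right ?_ (by positivity)
          rw [le_div_iff₀ (by positivity : (0:ℝ) < ε ^ n)]
          exact hcard
      _ = M * δ'' * V / ε ^ n := by ring
  -- conclusion
  rw [Real.dist_eq, hsub1, hsub2]
  have heq : ε ^ n * (∫ u, g u) - m * (ε ^ n * ∫ u, f (ε • u))
      = ε ^ n * ((∫ u, g u) - m * ∫ u, f (ε • u)) := by ring
  rw [heq, ← hd.tsum_eq]
  have h1 : |ε ^ n * ∑' z, d z| ≤ ε ^ n * (M * δ'' * V / ε ^ n) := by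
    rw [abs_mul, abs_of_pos (by positivity : (0:ℝ) < ε ^ n)]
    have h2 : |∑' z, d z| ≤ ∑' z, |d z| := by
      simpa [Real.norm_eq_abs] using norm_tsum_le_tsum_norm (by
        simpa [Real.norm_eq_abs] using habs_sum : Summable fun z => ‖d z‖)
    exact mul_le_mul_of_nonneg_left (le_trans h2 htsum_le) (by positivity)
  have h3 : ε ^ n * (M * δ'' * V / ε ^ n) = M * δ'' * V := by
    field_simp
  calc |ε ^ n * ∑' z, d z| ≤ M * δ'' * V := by rw [← h3]; exact h1
    _ ≤ (M + 1) * (V + 1) * δ'' := by nlinarith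
    _ = δ / 2 := by rw [hδ''_def]; field_simp
    _ < δ := by linarith

theorem chi_mean_abs {χ : (Fin n → ℝ) → ℝ} (hmeas : Measurable χ) {M : ℝ}
    (hM : ∀ ξ, |χ ξ| ≤ M) : |∫ y in BB n, χ y| ≤ M := by
  have := norm_setIntegral_le_of_norm_le_const (μ := volume) (s := BB n) (C := M) (f := χ)
    (by simp [volume_BB]) (fun x _ => by simpa [Real.norm_eq_abs] using hM x)
  simpa [Measure.real, volume_BB, Real.norm_eq_abs] using this

set_option maxHeartbeats 1000000 in
theorem weak_limit {M : ℝ} (χ : (Fin n → ℝ) → ℝ) (hmeas : Measurable χ)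
    (hM : ∀ ξ, |χ ξ| ≤ M)
    (hper : ∀ (ξ : Fin n → ℝ) (z : Fin n → ℤ), χ (ξ + fun i => (z i : ℝ)) = χ ξ)
    (ψ : (Fin n → ℝ) → ℝ) (hψ : Integrable ψ) :
    Tendsto (fun ε : ℝ => ∫ x, χ (ε⁻¹ • x) * ψ x) (nhdsWithin 0 (Set.Ioi 0))
      (nhds ((∫ y in BB n, χ y) * ∫ x, ψ x)) := by
  have hM0 : 0 ≤ M := le_trans (abs_nonneg _) (hM 0)
  have hmabs : |∫ y in BB n, χ y| ≤ M := chi_mean_abs hmeas hM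
  rw [Metric.tendsto_nhdsWithin_nhds]
  intro δ hδ
  obtain ⟨f, hfc, hfL1, hf, hfint⟩ := hψ.exists_hasCompactSupport_integral_sub_le
    (show (0:ℝ) < δ / (3 * (M + 1)) by positivity)
  have hcore := core χ hmeas hM hper f hf hfc
  rw [Metric.tendsto_nhdsWithin_nhds] at hcore
  obtain ⟨ε₁, hε₁, hcore'⟩ := hcore (δ / 3) (by positivity)
  refine ⟨ε₁, hε₁, ?_⟩
  intro ε hεmem hεdist
  have hε : (0:ℝ) < ε := hεmem
  have hχε : ∀ φ : (Fin n → ℝ) → ℝ, Integrable φ →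
      Integrable (fun x => χ (ε⁻¹ • x) * φ x) := by
    intro φ hφ
    refine hφ.bdd_mul ?_ (c := M) (Eventually.of_forall fun x => by simpa [Real.norm_eq_abs] using hM _)
    exact (hmeas.comp (measurable_const_smul ε⁻¹)).aestronglyMeasurable
  have hL1 : (∫ x, |ψ x - f x|) ≤ δ / (3 * (M + 1)) := by
    simpa [Real.norm_eq_abs] using hfL1
  have h1 : |(∫ x, χ (ε⁻¹ • x) * ψ x) - ∫ x, χ (ε⁻¹ • x) * f x| ≤ M * (δ / (3 * (M + 1))) := by
    rw [← integral_sub (hχε ψ hψ) (hχε f hfint)]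
    have h2 : ∀ x, χ (ε⁻¹ • x) * ψ x - χ (ε⁻¹ • x) * f x = χ (ε⁻¹ • x) * (ψ x - f x) :=
      fun x => by ring
    simp_rw [h2]
    calc |∫ x, χ (ε⁻¹ • x) * (ψ x - f x)| ≤ ∫ x, |χ (ε⁻¹ • x) * (ψ x - f x)| := by
          simpa only [Real.norm_eq_abs] using
            norm_integral_le_integral_norm fun x => χ (ε⁻¹ • x) * (ψ x - f x)
      _ ≤ ∫ x, M * |ψ x - f x| := by
          refine integral_mono (hχε _ (hψ.sub hfint)).abs
            (((hψ.sub hfint).abs).const_mul M) fun x => ?_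
          rw [abs_mul]
          exact mul_le_mul_of_nonneg_right (hM _) (abs_nonneg _)
      _ = M * ∫ x, |ψ x - f x| := integral_const_mul M _
      _ ≤ M * (δ / (3 * (M + 1))) := mul_le_mul_of_nonneg_left hL1 hM0
  have h3 : |(∫ y in BB n, χ y) * (∫ x, f x) - (∫ y in BB n, χ y) * ∫ x, ψ x|
      ≤ M * (δ / (3 * (M + 1))) := by
    rw [← mul_sub, abs_mul]
    refine mul_le_mul hmabs ?_ (abs_nonneg _) hM0
    rw [← integral_sub hfint hψ]
    calc |∫ x, (f x - ψ x)| ≤ ∫ x, |f x - ψ x| := by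
          simpa only [Real.norm_eq_abs] using
            norm_integral_le_integral_norm fun x => f x - ψ x
      _ = ∫ x, |ψ x - f x| := by simp_rw [abs_sub_comm]
      _ ≤ δ / (3 * (M + 1)) := hL1
  have hcd := hcore' hεmem hεdist
  rw [Real.dist_eq] at hcd ⊢
  have hMd : M * (δ / (3 * (M + 1))) ≤ δ / 3 := by
    have hq : M / (M + 1) ≤ 1 := (div_le_one (by positivity)).2 (by linarith)
    calc M * (δ / (3 * (M + 1))) = δ / 3 * (M / (M + 1)) := by field_simp
      _ ≤ δ / 3 * 1 := mul_le_mul_of_nonneg_left hq (by positivity)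
      _ = δ / 3 := mul_one _
  have t1 := abs_sub_le (∫ x, χ (ε⁻¹ • x) * ψ x) (∫ x, χ (ε⁻¹ • x) * f x)
    ((∫ y in BB n, χ y) * ∫ x, ψ x)
  have t2 := abs_sub_le (∫ x, χ (ε⁻¹ • x) * f x) ((∫ y in BB n, χ y) * ∫ x, f x)
    ((∫ y in BB n, χ y) * ∫ x, ψ x)
  linarith [h1, h3, hcd, t1, t2]

theorem BB_ae_Icc : (BB n : Set (Fin n → ℝ)) =ᵐ[volume] Set.Icc (0 : Fin n → ℝ) 1 := by
  rw [show (volume : Measure (Fin n → ℝ)) = Measure.pi fun _ => volume from rfl]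
  have h := Measure.univ_pi_Ico_ae_eq_Icc (μ := fun _ : Fin n => (volume : Measure ℝ))
    (f := 0) (g := 1)
  simpa [BB] using h

end Stmt8Aux

/-- Weak `L²` convergence of rescaled periodic functions to their mean. -/
theorem stmt_8 (n : ℕ) (χ : (Fin n → ℝ) → ℝ)
    (hmeas : Measurable χ) (hbdd : ∃ M : ℝ, ∀ ξ, |χ ξ| ≤ M)
    (hper : ∀ (ξ : Fin n → ℝ) (z : Fin n → ℤ), χ (ξ + fun i => (z i : ℝ)) = χ ξ)
    (Ω : Set (Fin n → ℝ)) (hΩ : IsOpen Ω) (hΩbdd : Bornology.IsBounded Ω) :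
    ∀ φ : (Fin n → ℝ) → ℝ, MemLp φ 2 (volume.restrict Ω) →
      Tendsto (fun ε : ℝ => ∫ x in Ω, χ (ε⁻¹ • x) * φ x)
        (nhdsWithin 0 (Set.Ioi 0))
        (nhds ((∫ ξ in Set.Icc (0 : Fin n → ℝ) 1, χ ξ) * ∫ x in Ω, φ x)) := by
  obtain ⟨M, hM⟩ := hbdd
  intro φ hφ
  have hΩm : MeasurableSet Ω := hΩ.measurableSet
  haveI : IsFiniteMeasure (volume.restrict Ω) := by
    constructor
    rw [Measure.restrict_apply_univ]
    exact hΩbdd.measure_lt_top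
  have hφ1 : IntegrableOn φ Ω := by
    have h1 : MemLp φ 1 (volume.restrict Ω) :=
      hφ.mono_exponent (by norm_num)
    exact (memLp_one_iff_integrable.1 h1)
  have hψ : Integrable (Ω.indicator φ) volume := hφ1.integrable_indicator hΩm
  have key := Stmt8Aux.weak_limit χ hmeas hM hper (Ω.indicator φ) hψ
  have e1 : ∀ ε : ℝ, (∫ x in Ω, χ (ε⁻¹ • x) * φ x) = ∫ x, χ (ε⁻¹ • x) * Ω.indicator φ x := by
    intro ε
    rw [← integral_indicator hΩm]
    congr 1
    funext x
    by_cases hx : x ∈ Ω <;>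
      simp [Set.indicator_of_mem, Set.indicator_of_notMem, hx]
  have e2 : (∫ x in Ω, φ x) = ∫ x, Ω.indicator φ x := (integral_indicator hΩm).symm
  have e3 : (∫ ξ in Set.Icc (0 : Fin n → ℝ) 1, χ ξ) = ∫ y in Stmt8Aux.BB n, χ y :=
    (setIntegral_congr_set Stmt8Aux.BB_ae_Icc).symm
  simp_rw [e1, e2, e3]
  exact key
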